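/- arXiv:2106.05421 — 3 statements merged into one kernel-verified Lean document; each statement's English description precedes it below -/
import Mathlib

section
/- The weakest liberal pre-expectation of the loop is a fixed point of the characteristic function: if the post-expectation E : Σ → ℝ≥0∞ satisfies E ≤ 1 pointwise, then the expectation wlpe E defined by (wlpe E) σ := (∑' τ, W σ τ * E τ) + (1 - ∑' τ, W σ τ) satisfies Φ_E (wlpe E) = wlpe E, and moreover (wlpe E) σ ≤ 1 for all σ. -/
open ENNReal

/-- The characteristic function of the loop `while G do body` with respect to
post-expectation `E`. -/
noncomputable def Phi {S : Type*} (G : S → Prop) [DecidablePred G] (body : S → PMF S)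
    (E : S → ℝ≥0∞) (X : S → ℝ≥0∞) : S → ℝ≥0∞ :=
  fun σ => if G σ then ∑' τ, body σ τ * X τ else E σ

theorem Phi_monotone {S : Type*} (G : S → Prop) [DecidablePred G] (body : S → PMF S)
    (E : S → ℝ≥0∞) : Monotone (Phi G body E) := by
  intro X Y hXY σ
  simp only [Phi]
  split
  · exact ENNReal.tsum_le_tsum fun τ => mul_le_mul_of_nonneg_left (hXY τ) zero_le
  · exact le_rfl

/-- The characteristic function, bundled as a monotone map on the complete
lattice of expectations. -/
noncomputable def PhiHom {S : Type*} (G : S → Prop) [DecidablePred G] (body : S → PMF S)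
    (E : S → ℝ≥0∞) : (S → ℝ≥0∞) →o (S → ℝ≥0∞) :=
  ⟨Phi G body E, Phi_monotone G body E⟩

/-- The stopped `n`-step kernels of the loop `while G do body`. -/
noncomputable def mu {S : Type*} (G : S → Prop) [DecidablePred G] [DecidableEq S]
    (body : S → PMF S) : ℕ → S → S → ℝ≥0∞
  | 0 => fun σ τ => if ¬ G σ ∧ τ = σ then 1 else 0
  | n + 1 => fun σ =>
      if G σ then (fun τ => ∑' σ', body σ σ' * mu G body n σ' τ) else mu G body 0 σ

/-- The loop's output sub-distribution. -/
noncomputable def W {S : Type*} (G : S → Prop) [DecidablePred G] [DecidableEq S]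
    (body : S → PMF S) (σ τ : S) : ℝ≥0∞ :=
  ⨆ n, mu G body n σ τ

/-- The weakest liberal pre-expectation of the loop. -/
noncomputable def wlpe {S : Type*} (G : S → Prop) [DecidablePred G] [DecidableEq S]
    (body : S → PMF S) (E : S → ℝ≥0∞) : S → ℝ≥0∞ :=
  fun σ => (∑' τ, W G body σ τ * E τ) + (1 - ∑' τ, W G body σ τ)


section Aux

variable {S : Type*} (G : S → Prop) [DecidablePred G] [DecidableEq S] (body : S → PMF S)

lemma tsum_iSup_mono {α : Type*} {f : ℕ → α → ℝ≥0∞} (hf : Monotone f) :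
    ∑' a, ⨆ n, f n a = ⨆ n, ∑' a, f n a := by
  rw [ENNReal.tsum_eq_iSup_sum]
  have h : ∀ s : Finset α, (∑ a ∈ s, ⨆ n, f n a) = ⨆ n, ∑ a ∈ s, f n a := fun s =>
    ENNReal.finsetSum_iSup_of_monotone (fun a _ _ h => hf h a)
  simp_rw [h]
  rw [iSup_comm]
  simp_rw [← ENNReal.tsum_eq_iSup_sum]

lemma mu_succ_guard (n : ℕ) {σ : S} (hG : G σ) (τ : S) :
    mu G body (n + 1) σ τ = ∑' σ', body σ σ' * mu G body n σ' τ := by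
  simp [mu, hG]

lemma mu_mono : Monotone (mu G body) := by
  refine monotone_nat_of_le_succ ?_
  intro n
  induction n with
  | zero =>
    intro σ τ
    by_cases hG : G σ
    · simp [mu, hG]
    · simp [mu, hG]
  | succ n ih =>
    intro σ τ
    by_cases hG : G σ
    · rw [mu_succ_guard G body n hG τ, mu_succ_guard G body (n + 1) hG τ]
      exact ENNReal.tsum_le_tsum fun σ' => mul_le_mul_right (ih σ' τ) _
    · simp [mu, hG]

lemma mu_not_guard (n : ℕ) {σ : S} (hG : ¬ G σ) (τ : S) :
    mu G body n σ τ = if τ = σ then 1 else 0 := by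
  cases n with
  | zero => simp [mu, hG]
  | succ n => simp [mu, hG]

lemma W_not_guard {σ : S} (hG : ¬ G σ) (τ : S) :
    W G body σ τ = if τ = σ then 1 else 0 := by
  simp [W, mu_not_guard G body _ hG]

lemma W_guard {σ : S} (hG : G σ) (ρ : S) :
    W G body σ ρ = ∑' τ, body σ τ * W G body τ ρ := by
  have h1 : W G body σ ρ = ⨆ n, mu G body (n + 1) σ ρ := by
    refine le_antisymm (iSup_le fun n => ?_) (iSup_le fun n => le_iSup_of_le (n + 1) le_rfl)
    exact le_iSup_of_le n (mu_mono G body (Nat.le_succ n) σ ρ)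
  rw [h1]
  simp only [mu, hG, if_true]
  rw [← tsum_iSup_mono (f := fun n τ => body σ τ * mu G body n τ ρ)
    (fun m n hmn τ => mul_le_mul_right (mu_mono G body hmn τ ρ) _)]
  simp only [W]
  congr 1; ext τ; rw [ENNReal.mul_iSup]

lemma tsum_mu_le_one (n : ℕ) (σ : S) : ∑' τ, mu G body n σ τ ≤ 1 := by
  induction n generalizing σ with
  | zero =>
    by_cases hG : G σ
    · simp [mu, hG]
    · simp [mu, hG, tsum_ite_eq]
  | succ n ih =>
    by_cases hG : G σ
    · simp only [mu, hG, if_true]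
      rw [ENNReal.tsum_comm]
      calc ∑' σ', ∑' τ, body σ σ' * mu G body n σ' τ
          = ∑' σ', body σ σ' * ∑' τ, mu G body n σ' τ := by
            congr 1; ext σ'; rw [ENNReal.tsum_mul_left]
        _ ≤ ∑' σ', body σ σ' * 1 :=
            ENNReal.tsum_le_tsum fun σ' => mul_le_mul_right (ih σ') _
        _ = 1 := by simpa using (body σ).tsum_coe
    · simp [mu, hG, tsum_ite_eq]

lemma tsum_W_le_one (σ : S) : ∑' τ, W G body σ τ ≤ 1 := by
  simp only [W]
  rw [tsum_iSup_mono (fun m n h τ => mu_mono G body h σ τ)]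
  exact iSup_le fun n => tsum_mu_le_one G body n σ

end Aux

/-- the weakest liberal pre-expectation is a fixed point of the
characteristic function, and is bounded by one. -/
theorem wlpe_fixedPoint {S : Type*} [Countable S] [DecidableEq S]
    (G : S → Prop) [DecidablePred G] (body : S → PMF S)
    (E : S → ℝ≥0∞) (hE : ∀ σ, E σ ≤ 1) :
    Phi G body E (wlpe G body E) = wlpe G body E ∧ ∀ σ, wlpe G body E σ ≤ 1 := by
  have hWle : ∀ σ, ∑' τ, W G body σ τ ≤ 1 := tsum_W_le_one G body
  have hbound : ∀ σ, wlpe G body E σ ≤ 1 := by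
    intro σ
    have h1 : (∑' τ, W G body σ τ * E τ) ≤ ∑' τ, W G body σ τ :=
      ENNReal.tsum_le_tsum fun τ => by
        simpa using mul_le_mul_right (hE τ) (W G body σ τ)
    calc wlpe G body E σ ≤ (∑' τ, W G body σ τ) + (1 - ∑' τ, W G body σ τ) :=
          add_le_add_left h1 _
      _ = 1 := by rw [add_tsub_cancel_of_le (hWle σ)]
  refine ⟨?_, hbound⟩
  funext σ
  by_cases hG : G σ
  · simp only [Phi, hG, if_true, wlpe]
    have hsplit : ∀ τ, body σ τ * ((∑' ρ, W G body τ ρ * E ρ) + (1 - ∑' ρ, W G body τ ρ))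
        = body σ τ * (∑' ρ, W G body τ ρ * E ρ)
          + (body σ τ - body σ τ * ∑' ρ, W G body τ ρ) := by
      intro τ
      rw [mul_add, ENNReal.mul_sub (fun _ _ => PMF.apply_ne_top (body σ) τ), mul_one]
    rw [tsum_congr hsplit, ENNReal.tsum_add]
    congr 1
    · -- first summand
      calc ∑' τ, body σ τ * ∑' ρ, W G body τ ρ * E ρ
          = ∑' τ, ∑' ρ, body σ τ * (W G body τ ρ * E ρ) :=
            tsum_congr fun τ => ENNReal.tsum_mul_left.symm
        _ = ∑' ρ, ∑' τ, body σ τ * (W G body τ ρ * E ρ) := ENNReal.tsum_comm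
        _ = ∑' ρ, W G body σ ρ * E ρ := by
            refine tsum_congr fun ρ => ?_
            simp_rw [← mul_assoc]
            rw [ENNReal.tsum_mul_right, ← W_guard G body hG]
    · -- second summand
      have hle : ∀ τ, body σ τ * ∑' ρ, W G body τ ρ ≤ body σ τ := fun τ => by
        simpa using mul_le_mul_right (hWle τ) (body σ τ)
      have hfin : (∑' τ, body σ τ * ∑' ρ, W G body τ ρ) ≠ ∞ := by
        refine ne_top_of_le_ne_top (by simp : (1 : ℝ≥0∞) ≠ ∞) ?_
        calc (∑' τ, body σ τ * ∑' ρ, W G body τ ρ) ≤ ∑' τ, (body σ τ : ℝ≥0∞) :=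
              ENNReal.tsum_le_tsum hle
          _ = 1 := by simpa using (body σ).tsum_coe
      have hkey : (∑' τ, (body σ τ - body σ τ * ∑' ρ, W G body τ ρ))
          = 1 - ∑' τ, body σ τ * ∑' ρ, W G body τ ρ := by
        refine ENNReal.eq_sub_of_add_eq hfin ?_
        rw [← ENNReal.tsum_add]
        calc (∑' τ, ((body σ τ - body σ τ * ∑' ρ, W G body τ ρ)
                + body σ τ * ∑' ρ, W G body τ ρ))
            = ∑' τ, (body σ τ : ℝ≥0∞) :=
              tsum_congr fun τ => tsub_add_cancel_of_le (hle τ)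
          _ = 1 := by simpa using (body σ).tsum_coe
      rw [hkey]
      congr 1
      calc ∑' τ, body σ τ * ∑' ρ, W G body τ ρ
          = ∑' τ, ∑' ρ, body σ τ * W G body τ ρ :=
            tsum_congr fun τ => ENNReal.tsum_mul_left.symm
        _ = ∑' ρ, ∑' τ, body σ τ * W G body τ ρ := ENNReal.tsum_comm
        _ = ∑' ρ, W G body σ ρ := tsum_congr fun ρ => (W_guard G body hG ρ).symm
  · have h1 : (∑' τ, W G body σ τ * E τ) = E σ := by
      rw [tsum_eq_single σ]
      · simp [W_not_guard G body hG]
      · intro τ hτ; simp [W_not_guard G body hG, hτ]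
    have h2 : (∑' τ, W G body σ τ) = 1 := by
      simp only [W_not_guard G body hG]
      exact tsum_ite_eq σ 1
    simp [Phi, hG, wlpe, h1, h2]
end

section
/- The weakest liberal pre-expectation is the greatest sub-fixed point of the characteristic function in the lattice of expectations bounded by one: if the post-expectation E : Σ → ℝ≥0∞ satisfies E ≤ 1 pointwise, then every expectation I : Σ → ℝ≥0∞ with I ≤ 1 pointwise and I ≤ Φ_E I pointwise satisfies I ≤ wlpe E pointwise, where (wlpe E) σ := (∑' τ, W σ τ * E τ) + (1 - ∑' τ, W σ τ). -/
open ENNReal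

lemma my_tsum_iSup {α : Type*} (f : ℕ → α → ℝ≥0∞) (hf : Monotone f) :
    ∑' a, ⨆ n, f n a = ⨆ n, ∑' a, f n a := by
  apply le_antisymm
  · rw [ENNReal.tsum_eq_iSup_sum]
    apply iSup_le; intro s
    rw [ENNReal.finsetSum_iSup_of_monotone (fun a i j h => hf h a)]
    exact iSup_mono fun n => ENNReal.sum_le_tsum s
  · exact iSup_le fun n => ENNReal.tsum_le_tsum fun a => le_iSup (fun n => f n a) n

lemma mu_succ {S : Type*} (G : S → Prop) [DecidablePred G] [DecidableEq S]
    (body : S → PMF S) (n : ℕ) (σ : S) :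
    mu G body (n+1) σ = if G σ then (fun τ => ∑' σ', body σ σ' * mu G body n σ' τ)
      else mu G body 0 σ := by simp only [mu]

lemma mu_zero_tsum {S : Type*} (G : S → Prop) [DecidablePred G] [DecidableEq S]
    (body : S → PMF S) {σ : S} (h : ¬ G σ) (g : S → ℝ≥0∞) :
    ∑' τ, mu G body 0 σ τ * g τ = g σ := by
  have : ∀ τ : S, mu G body 0 σ τ * g τ = if τ = σ then g σ else 0 := by
    intro τ
    simp only [mu, h, not_false_iff, true_and]
    by_cases hτ : τ = σ <;> simp [hτ]
  rw [tsum_congr this, tsum_ite_eq σ]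

lemma mu_mono_s9 {S : Type*} (G : S → Prop) [DecidablePred G] [DecidableEq S]
    (body : S → PMF S) : ∀ n σ τ, mu G body n σ τ ≤ mu G body (n+1) σ τ := by
  intro n
  induction n with
  | zero =>
    intro σ τ
    by_cases h : G σ
    · rw [mu_succ, if_pos h]
      simp [mu, h]
    · rw [mu_succ, if_neg h]
  | succ n ih =>
    intro σ τ
    by_cases h : G σ
    · rw [mu_succ, if_pos h, mu_succ, if_pos h]
      exact ENNReal.tsum_le_tsum fun σ' => mul_le_mul_right (ih σ' τ) _
    · rw [mu_succ, if_neg h, mu_succ, if_neg h]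

lemma mu_mass {S : Type*} (G : S → Prop) [DecidablePred G] [DecidableEq S]
    (body : S → PMF S) : ∀ n σ, ∑' τ, mu G body n σ τ ≤ 1 := by
  have base : ∀ σ : S, ∑' τ, mu G body 0 σ τ ≤ 1 := by
    intro σ
    by_cases h : G σ
    · simp [mu, h]
    · have := mu_zero_tsum G body h (fun _ => (1:ℝ≥0∞))
      simp only [mul_one] at this
      rw [this]
  intro n
  induction n with
  | zero => exact base
  | succ n ih =>
    intro σ
    by_cases h : G σ
    · rw [mu_succ, if_pos h]
      rw [ENNReal.tsum_comm]
      calc ∑' σ', ∑' τ, body σ σ' * mu G body n σ' τ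
          = ∑' σ', body σ σ' * ∑' τ, mu G body n σ' τ := by
            congr 1; funext σ'; rw [ENNReal.tsum_mul_left]
        _ ≤ ∑' σ', body σ σ' * 1 := ENNReal.tsum_le_tsum fun σ' => mul_le_mul_right (ih σ') _
        _ = 1 := by simp [(body σ).tsum_coe]
    · rw [mu_succ, if_neg h]; exact base σ

/-- the weakest liberal pre-expectation is the greatest sub-fixed
point of the characteristic function among expectations bounded by one. -/
theorem le_wlpe_of_subfixed {S : Type*} [Countable S] [DecidableEq S]
    (G : S → Prop) [DecidablePred G] (body : S → PMF S)
    (E : S → ℝ≥0∞) (hE : ∀ σ, E σ ≤ 1)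
    (I : S → ℝ≥0∞) (hI : ∀ σ, I σ ≤ 1)
    (hsub : ∀ σ, I σ ≤ Phi G body E I σ) :
    ∀ σ, I σ ≤ wlpe G body E σ := by
  set F : S → ℝ≥0∞ := fun τ => 1 - E τ with hF
  set c : ℕ → S → ℝ≥0∞ := fun n σ => ∑' τ, mu G body n σ τ * F τ with hcdef
  have hc1 : ∀ n σ', c n σ' ≤ 1 := by
    intro n σ'
    refine le_trans (ENNReal.tsum_le_tsum fun τ => ?_) (mu_mass G body n σ')
    calc mu G body n σ' τ * F τ ≤ mu G body n σ' τ * 1 :=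
          mul_le_mul_right tsub_le_self _
      _ = mu G body n σ' τ := mul_one _
  -- base case helper (¬ G σ)
  have hbase : ∀ σ, ¬ G σ → I σ ≤ 1 - c 0 σ := by
    intro σ h
    have hc0 : c 0 σ = 1 - E σ := mu_zero_tsum G body h F
    rw [hc0, ENNReal.sub_sub_cancel one_ne_top (hE σ)]
    have := hsub σ
    simpa [Phi, h] using this
  have key : ∀ n σ, I σ ≤ 1 - c n σ := by
    intro n
    induction n with
    | zero =>
      intro σ
      by_cases h : G σ
      · have : c 0 σ = 0 := by
          simp [hcdef, mu, h]
        rw [this]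
        exact le_trans (hI σ) (by simp)
      · exact hbase σ h
    | succ n ih =>
      intro σ
      by_cases h : G σ
      · have hcs : c (n+1) σ = ∑' σ', body σ σ' * c n σ' := by
          simp only [hcdef]
          rw [mu_succ, if_pos h]
          calc ∑' τ, (∑' σ', body σ σ' * mu G body n σ' τ) * F τ
              = ∑' τ, ∑' σ', body σ σ' * mu G body n σ' τ * F τ := by
                congr 1; funext τ; rw [ENNReal.tsum_mul_right]
            _ = ∑' σ', ∑' τ, body σ σ' * mu G body n σ' τ * F τ := ENNReal.tsum_comm
            _ = ∑' σ', body σ σ' * ∑' τ, mu G body n σ' τ * F τ := by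
                congr 1; funext σ'
                rw [← ENNReal.tsum_mul_left]
                congr 1; funext τ; rw [mul_assoc]
        have hflip : ∑' σ', body σ σ' * (1 - c n σ') = 1 - ∑' σ', body σ σ' * c n σ' := by
          have hadd : (∑' σ', body σ σ' * (1 - c n σ')) + ∑' σ', body σ σ' * c n σ' = 1 := by
            rw [← ENNReal.tsum_add]
            calc ∑' σ', (body σ σ' * (1 - c n σ') + body σ σ' * c n σ')
                = ∑' σ', body σ σ' * ((1 - c n σ') + c n σ') := by
                  congr 1; funext σ'; rw [mul_add]
              _ = ∑' σ', body σ σ' := by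
                  congr 1; funext σ'
                  rw [tsub_add_cancel_of_le (hc1 n σ'), mul_one]
              _ = 1 := (body σ).tsum_coe
          have hfin : (∑' σ', body σ σ' * c n σ') ≠ ∞ := by
            refine ne_top_of_le_ne_top one_ne_top ?_
            calc (∑' σ', body σ σ' * c n σ') ≤ ∑' σ', body σ σ' * 1 :=
                  ENNReal.tsum_le_tsum fun σ' => mul_le_mul_right (hc1 n σ') _
              _ = 1 := by simp [(body σ).tsum_coe]
          exact ENNReal.eq_sub_of_add_eq hfin hadd
        rw [hcs, ← hflip]
        refine le_trans (hsub σ) ?_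
        simp only [Phi, h, if_true]
        exact ENNReal.tsum_le_tsum fun σ' => mul_le_mul_right (ih σ') _
      · have : c (n+1) σ = c 0 σ := by
          simp only [hcdef]; rw [mu_succ, if_neg h]
        rw [this]
        exact hbase σ h
  intro σ
  have hmono : Monotone (fun n => fun τ => mu G body n σ τ * F τ) := by
    intro m k hmk
    induction hmk with
    | refl => exact le_rfl
    | step _ ih =>
      exact le_trans ih (fun τ => mul_le_mul_left (mu_mono_s9 G body _ σ τ) _)
  have hmono' : Monotone (fun n => fun τ => mu G body n σ τ) := by
    intro m k hmk
    induction hmk with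
    | refl => exact le_rfl
    | step _ ih =>
      exact le_trans ih (fun τ => mu_mono_s9 G body _ σ τ)
  have hb : (∑' τ, W G body σ τ * F τ) = ⨆ n, c n σ := by
    calc (∑' τ, W G body σ τ * F τ) = ∑' τ, ⨆ n, mu G body n σ τ * F τ := by
          congr 1; funext τ; rw [W, ENNReal.iSup_mul]
      _ = ⨆ n, c n σ := my_tsum_iSup _ hmono
  have hs : (∑' τ, W G body σ τ) = ⨆ n, ∑' τ, mu G body n σ τ := by
    calc (∑' τ, W G body σ τ) = ∑' τ, ⨆ n, mu G body n σ τ := rfl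
      _ = ⨆ n, ∑' τ, mu G body n σ τ := my_tsum_iSup _ hmono'
  have hs1 : (∑' τ, W G body σ τ) ≤ 1 := by
    rw [hs]; exact iSup_le fun n => mu_mass G body n σ
  have hIb : I σ ≤ 1 - ∑' τ, W G body σ τ * F τ := by
    rw [hb, ENNReal.sub_iSup one_ne_top]
    exact le_iInf fun n => key n σ
  refine le_trans hIb (le_of_eq ?_)
  -- show 1 - b = a + (1 - s)
  set a := ∑' τ, W G body σ τ * E τ
  set b := ∑' τ, W G body σ τ * F τ
  set s := ∑' τ, W G body σ τ
  have hab : a + b = s := by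
    rw [← ENNReal.tsum_add]
    congr 1; funext τ
    rw [← mul_add, hF, add_tsub_cancel_of_le (hE τ), mul_one]
  have hble : b ≤ 1 := le_trans (le_trans le_add_self (le_of_eq hab)) hs1
  have : (a + (1 - s)) + b = 1 := by
    rw [add_right_comm, hab, add_tsub_cancel_of_le hs1]
  have := ENNReal.eq_sub_of_add_eq (ne_top_of_le_ne_top one_ne_top hble) this
  exact this.symm
end

section
/- The weakest pre-expectation of a loop is homogeneous in the post-expectation: for every c : ℝ≥0∞ with 0 < c and c < ∞, and every post-expectation E : Σ → ℝ≥0∞, lfp Φ_{c·E} = fun σ => c * (lfp Φ_E) σ, where c·E denotes the post-expectation fun σ => c * E σ. -/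
open ENNReal

/-- the weakest pre-expectation of a loop is homogeneous in the
post-expectation, for positive finite scalars. -/
theorem lfp_smul {S : Type*} [Countable S]
    (G : S → Prop) [DecidablePred G] (body : S → PMF S)
    (c : ℝ≥0∞) (hc0 : 0 < c) (hctop : c < ⊤) (E : S → ℝ≥0∞) :
    OrderHom.lfp (PhiHom G body (fun σ => c * E σ)) =
      fun σ => c * OrderHom.lfp (PhiHom G body E) σ := by
  have key : ∀ (d : ℝ≥0∞) (F X : S → ℝ≥0∞),
      Phi G body (fun σ => d * F σ) (fun σ => d * X σ) = fun σ => d * Phi G body F X σ := by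
    intro d F X
    funext σ
    simp only [Phi]
    split
    · rw [← ENNReal.tsum_mul_left]
      exact tsum_congr fun τ => by ring
    · rfl
  have hfixE : Phi G body E (OrderHom.lfp (PhiHom G body E)) = OrderHom.lfp (PhiHom G body E) :=
    OrderHom.map_lfp (PhiHom G body E)
  have hfixc : Phi G body (fun σ => c * E σ) (OrderHom.lfp (PhiHom G body (fun σ => c * E σ)))
      = OrderHom.lfp (PhiHom G body (fun σ => c * E σ)) :=
    OrderHom.map_lfp (PhiHom G body (fun σ => c * E σ))
  apply le_antisymm
  · apply OrderHom.lfp_le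
    show Phi G body (fun σ => c * E σ) (fun σ => c * OrderHom.lfp (PhiHom G body E) σ)
        ≤ fun σ => c * OrderHom.lfp (PhiHom G body E) σ
    have h := key c E (OrderHom.lfp (PhiHom G body E))
    rw [h]
    intro σ
    rw [show Phi G body E (fun σ => OrderHom.lfp (PhiHom G body E) σ)
        = OrderHom.lfp (PhiHom G body E) from hfixE]
  · have hinv : c⁻¹ * c = 1 := ENNReal.inv_mul_cancel hc0.ne' hctop.ne
    have h1 : OrderHom.lfp (PhiHom G body E) ≤
        fun σ => c⁻¹ * OrderHom.lfp (PhiHom G body (fun σ => c * E σ)) σ := by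
      apply OrderHom.lfp_le
      show Phi G body E
          (fun σ => c⁻¹ * OrderHom.lfp (PhiHom G body (fun σ => c * E σ)) σ)
          ≤ fun σ => c⁻¹ * OrderHom.lfp (PhiHom G body (fun σ => c * E σ)) σ
      have hE : (fun σ => c⁻¹ * (c * E σ)) = E := by
        funext σ; rw [← mul_assoc, hinv, one_mul]
      have h := key c⁻¹ (fun σ => c * E σ)
        (OrderHom.lfp (PhiHom G body (fun σ => c * E σ)))
      rw [hE] at h
      rw [h]
      intro σ
      rw [show Phi G body (fun σ => c * E σ)
          (fun σ => OrderHom.lfp (PhiHom G body (fun σ => c * E σ)) σ)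
          = OrderHom.lfp (PhiHom G body (fun σ => c * E σ)) from hfixc]
    intro σ
    calc c * OrderHom.lfp (PhiHom G body E) σ
        ≤ c * (c⁻¹ * OrderHom.lfp (PhiHom G body (fun σ => c * E σ)) σ) :=
          mul_le_mul_right (h1 σ) c
      _ = OrderHom.lfp (PhiHom G body (fun σ => c * E σ)) σ := by
          rw [← mul_assoc, ENNReal.mul_inv_cancel hc0.ne' hctop.ne, one_mul]
end
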